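/- Let P̂ ∈ ℝ^{n×n} be a positive-definite diagonal matrix, let Δ ∈ ℝ^{n×n} be symmetric positive semidefinite with Δ ≠ 0, and for β > 0 set H(β) = P̂ − 2βΔ. Let β_cr = 1 / (2 λ_max(P̂^{−1/2} Δ P̂^{−1/2})). Then H(β) is positive definite for every β with 0 < β < β_cr, H(β_cr) is positive semidefinite but singular, and for every β > β_cr there exists Ψ ∈ ℝ^n with Ψᵀ H(β) Ψ < 0. -/

import Mathlib

open Matrix

/-- **Phase transitions.** Let `P̂ = diag A` be positive definite, `Δ` symmetric
positive semidefinite with `Δ ≠ 0`, and `H(β) = P̂ − 2βΔ`.  With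
`β_cr = 1/(2 λ_max(P̂^{-1/2} Δ P̂^{-1/2}))` (λ_max characterized variationally), `H(β)` is
positive definite for `0 < β < β_cr`, `H(β_cr)` is positive semidefinite but singular, and for
`β > β_cr` there is a direction of negative curvature. -/
theorem stmt_7 (n : ℕ) (A : Fin n → ℝ) (hA : ∀ i, 0 < A i)
    (Δ : Matrix (Fin n) (Fin n) ℝ) (hΔsym : Δ.IsSymm) (hΔpsd : Δ.PosSemidef) (hΔne : Δ ≠ 0)
    (M : Matrix (Fin n) (Fin n) ℝ)
    (hM : M = Matrix.diagonal (fun i => (Real.sqrt (A i))⁻¹) * Δ *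
      Matrix.diagonal (fun i => (Real.sqrt (A i))⁻¹))
    (lamMax : ℝ)
    (hlamUb : ∀ v : Fin n → ℝ, v ⬝ᵥ M.mulVec v ≤ lamMax * (v ⬝ᵥ v))
    (hlamAtt : ∃ v : Fin n → ℝ, v ≠ 0 ∧ v ⬝ᵥ M.mulVec v = lamMax * (v ⬝ᵥ v))
    (βcr : ℝ) (hβcr : βcr = 1 / (2 * lamMax)) :
    (∀ β : ℝ, 0 < β → β < βcr → (Matrix.diagonal A - (2 * β) • Δ).PosDef) ∧
    (Matrix.diagonal A - (2 * βcr) • Δ).PosSemidef ∧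
    (∃ Ψ : Fin n → ℝ, Ψ ≠ 0 ∧ (Matrix.diagonal A - (2 * βcr) • Δ).mulVec Ψ = 0) ∧
    (∀ β : ℝ, βcr < β →
      ∃ Ψ : Fin n → ℝ, Ψ ⬝ᵥ (Matrix.diagonal A - (2 * β) • Δ).mulVec Ψ < 0) := by
  have hsq : ∀ i, 0 < Real.sqrt (A i) := fun i => Real.sqrt_pos.2 (hA i)
  set d : Fin n → ℝ := fun i => (Real.sqrt (A i))⁻¹ with hd
  set S : (Fin n → ℝ) → (Fin n → ℝ) := fun u i => Real.sqrt (A i) * u i with hS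
  have hDS : ∀ u : Fin n → ℝ, (Matrix.diagonal d).mulVec (S u) = u := by
    intro u; funext i
    simp only [Matrix.mulVec_diagonal, hd, hS]
    exact inv_mul_cancel_left₀ (hsq i).ne' _
  have hdotD : ∀ (u y : Fin n → ℝ), (S u) ⬝ᵥ (Matrix.diagonal d).mulVec y = u ⬝ᵥ y := by
    intro u y
    simp only [dotProduct, Matrix.mulVec_diagonal, hd, hS]
    refine Finset.sum_congr rfl fun i _ => ?_
    calc Real.sqrt (A i) * u i * ((Real.sqrt (A i))⁻¹ * y i)
        = (Real.sqrt (A i) * (Real.sqrt (A i))⁻¹) * (u i * y i) := by ring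
      _ = u i * y i := by rw [mul_inv_cancel₀ (hsq i).ne', one_mul]
  have htrans : ∀ u : Fin n → ℝ, (S u) ⬝ᵥ M.mulVec (S u) = u ⬝ᵥ Δ.mulVec u := by
    intro u
    rw [hM, ← Matrix.mulVec_mulVec, ← Matrix.mulVec_mulVec, hDS, hdotD]
  have hdiagq : ∀ u : Fin n → ℝ, u ⬝ᵥ (Matrix.diagonal A).mulVec u = (S u) ⬝ᵥ (S u) := by
    intro u
    simp only [dotProduct, Matrix.mulVec_diagonal, hS]
    refine Finset.sum_congr rfl fun i _ => ?_
    have h := Real.mul_self_sqrt (hA i).le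
    calc u i * (A i * u i) = A i * (u i * u i) := by ring
      _ = (Real.sqrt (A i) * Real.sqrt (A i)) * (u i * u i) := by rw [h]
      _ = Real.sqrt (A i) * u i * (Real.sqrt (A i) * u i) := by ring
  have hkey : ∀ u : Fin n → ℝ, u ⬝ᵥ Δ.mulVec u ≤ lamMax * (u ⬝ᵥ (Matrix.diagonal A).mulVec u) := by
    intro u
    rw [← htrans, hdiagq]
    exact hlamUb (S u)
  have hquad : ∀ (β : ℝ) (u : Fin n → ℝ),
      u ⬝ᵥ (Matrix.diagonal A - (2 * β) • Δ).mulVec u =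
      u ⬝ᵥ (Matrix.diagonal A).mulVec u - (2 * β) * (u ⬝ᵥ Δ.mulVec u) := by
    intro β u
    rw [Matrix.sub_mulVec, dotProduct_sub, Matrix.smul_mulVec,
      dotProduct_smul, smul_eq_mul]
  have hSne : ∀ u : Fin n → ℝ, u ≠ 0 → S u ≠ 0 := by
    intro u hu h
    apply hu; funext i
    have := congrFun h i
    simp only [hS, Pi.zero_apply] at this ⊢
    exact (mul_eq_zero.1 this).resolve_left (ne_of_gt (hsq i))
  have hself : ∀ v : Fin n → ℝ, v ≠ 0 → 0 < v ⬝ᵥ v := by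
    intro v hv
    rcases lt_or_eq_of_le (Finset.sum_nonneg fun i _ => mul_self_nonneg (v i) :
        (0:ℝ) ≤ v ⬝ᵥ v) with h | h
    · exact h
    · exact absurd (dotProduct_self_eq_zero.1 h.symm) hv
  -- some vector with positive Δ-form
  have hΔpos : ∃ u : Fin n → ℝ, 0 < u ⬝ᵥ Δ.mulVec u := by
    by_contra hcon
    push_neg at hcon
    apply hΔne
    have hz : ∀ u : Fin n → ℝ, Δ.mulVec u = 0 := by
      intro u
      have h0 : u ⬝ᵥ Δ.mulVec u = 0 :=
        le_antisymm (hcon u) (by simpa using (posSemidef_iff_dotProduct_mulVec.1 hΔpsd).2 u)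
      have := (hΔpsd.dotProduct_mulVec_zero_iff u).1 (by simpa using h0)
      exact this
    ext i j
    have := congrFun (hz (Pi.single j 1)) i
    simpa [Matrix.mulVec_single] using this
  have hlamPos : 0 < lamMax := by
    obtain ⟨u, hu⟩ := hΔpos
    have hune : u ≠ 0 := by rintro rfl; simp at hu
    have h1 : 0 < (S u) ⬝ᵥ M.mulVec (S u) := by rw [htrans]; exact hu
    have h2 := hlamUb (S u)
    have h3 : 0 < (S u) ⬝ᵥ (S u) := hself _ (hSne u hune)
    nlinarith
  have hlamne : lamMax ≠ 0 := ne_of_gt hlamPos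
  have hβcrPos : 0 < βcr := by rw [hβcr]; positivity
  have h2βcr : 2 * βcr * lamMax = 1 := by
    rw [hβcr]; field_simp
  -- Hermitianness
  have hherm : ∀ β : ℝ, (Matrix.diagonal A - (2 * β) • Δ).IsHermitian := by
    intro β
    refine (Matrix.isHermitian_diagonal A).sub ?_
    have hΔh : Δ.IsHermitian := hΔpsd.1
    unfold Matrix.IsHermitian at *
    rw [Matrix.conjTranspose_smul, hΔh]
    simp
  have hpsdq : ∀ x : Fin n → ℝ, 0 ≤ x ⬝ᵥ (Matrix.diagonal A - (2 * βcr) • Δ).mulVec x := by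
    intro x
    have h2 : 2 * βcr * (x ⬝ᵥ Δ.mulVec x) ≤ x ⬝ᵥ (Matrix.diagonal A).mulVec x := by
      calc 2 * βcr * (x ⬝ᵥ Δ.mulVec x)
          ≤ 2 * βcr * (lamMax * (x ⬝ᵥ (Matrix.diagonal A).mulVec x)) :=
            mul_le_mul_of_nonneg_left (hkey x) (by positivity)
        _ = (2 * βcr * lamMax) * (x ⬝ᵥ (Matrix.diagonal A).mulVec x) := by ring
        _ = x ⬝ᵥ (Matrix.diagonal A).mulVec x := by rw [h2βcr, one_mul]
    rw [hquad]; linarith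
  refine ⟨?_, ?_, ?_, ?_⟩
  · -- positive definite for 0 < β < βcr
    intro β hβ0 hββ
    refine posDef_iff_dotProduct_mulVec.2 ⟨hherm β, fun x hx => ?_⟩
    have hxd : 0 < x ⬝ᵥ (Matrix.diagonal A).mulVec x := by
      rw [hdiagq]; exact hself _ (hSne x hx)
    have hlt : 2 * β * lamMax < 1 := by
      calc 2 * β * lamMax = β * (2 * lamMax) := by ring
        _ < βcr * (2 * lamMax) :=
          mul_lt_mul_of_pos_right hββ (by positivity)
        _ = 1 := by rw [hβcr]; field_simp
    have h2 : 2 * β * (x ⬝ᵥ Δ.mulVec x) ≤ (2 * β * lamMax) * (x ⬝ᵥ (Matrix.diagonal A).mulVec x) := by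
      calc 2 * β * (x ⬝ᵥ Δ.mulVec x)
          ≤ 2 * β * (lamMax * (x ⬝ᵥ (Matrix.diagonal A).mulVec x)) :=
            mul_le_mul_of_nonneg_left (hkey x) (by positivity)
        _ = _ := by ring
    have h3 : (2 * β * lamMax) * (x ⬝ᵥ (Matrix.diagonal A).mulVec x) <
        1 * (x ⬝ᵥ (Matrix.diagonal A).mulVec x) := mul_lt_mul_of_pos_right hlt hxd
    have : 0 < x ⬝ᵥ (Matrix.diagonal A - (2 * β) • Δ).mulVec x := by
      rw [hquad]; linarith
    simpa using this
  · -- psd at βcr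
    exact posSemidef_iff_dotProduct_mulVec.2 ⟨hherm βcr, fun x => by simpa using hpsdq x⟩
  · -- singular direction at βcr
    obtain ⟨v, hvne, hvatt⟩ := hlamAtt
    refine ⟨fun i => d i * v i, ?_, ?_⟩
    · intro h
      apply hvne; funext i
      have := congrFun h i
      simp only [hd, Pi.zero_apply] at this ⊢
      exact (mul_eq_zero.1 this).resolve_left (inv_ne_zero (hsq i).ne')
    · set Ψ : Fin n → ℝ := fun i => d i * v i with hΨ
      have hSΨ : S Ψ = v := by
        funext i
        simp only [hS, hΨ, hd]
        exact mul_inv_cancel_left₀ (hsq i).ne' _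
      have hq : Ψ ⬝ᵥ (Matrix.diagonal A - (2 * βcr) • Δ).mulVec Ψ = 0 := by
        rw [hquad, hdiagq, ← htrans, hSΨ, hvatt]
        have : 2 * βcr * (lamMax * (v ⬝ᵥ v)) = v ⬝ᵥ v := by
          rw [← mul_assoc, h2βcr, one_mul]
        linarith
      have hpsd : (Matrix.diagonal A - (2 * βcr) • Δ).PosSemidef :=
        posSemidef_iff_dotProduct_mulVec.2 ⟨hherm βcr, fun x => by simpa using hpsdq x⟩
      exact (hpsd.dotProduct_mulVec_zero_iff Ψ).1 (by simpa using hq)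
  · -- negative curvature for β > βcr
    intro β hβ
    obtain ⟨v, hvne, hvatt⟩ := hlamAtt
    set Ψ : Fin n → ℝ := fun i => d i * v i with hΨ
    have hSΨ : S Ψ = v := by
      funext i
      simp only [hS, hΨ, hd]
      exact mul_inv_cancel_left₀ (hsq i).ne' _
    refine ⟨Ψ, ?_⟩
    have hvv : 0 < v ⬝ᵥ v := hself v hvne
    have h1 : 1 < 2 * β * lamMax := by
      calc (1:ℝ) = βcr * (2 * lamMax) := by rw [hβcr]; field_simp
        _ < β * (2 * lamMax) := mul_lt_mul_of_pos_right hβ (by positivity)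
        _ = 2 * β * lamMax := by ring
    rw [hquad, hdiagq, ← htrans, hSΨ, hvatt]
    have : 2 * β * (lamMax * (v ⬝ᵥ v)) = (2 * β * lamMax) * (v ⬝ᵥ v) := by ring
    nlinarith [mul_lt_mul_of_pos_right h1 hvv]
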